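/- Let A be an n×n row-stochastic matrix admitting a strictly positive invariant distribution π (πA = π with all π_i > 0), and let X ∈ ℚ^{C(n,2)} be nonnegative. If A^{∨2}·Xᵀ = Xᵀ, then X̂ = AX̂Aᵀ. -/
import Mathlib


open Matrix BigOperators Filter

/-- Index set of pairs `(i,j)` with `i < j`. -/
abbrev Pairs (n : ℕ) := {p : Fin n × Fin n // p.1 < p.2}

/-- Zeon second power: matrix of 2×2 permanents. -/
def zeonSq {n : ℕ} {R : Type*} [CommRing R] (A : Matrix (Fin n) (Fin n) R) :
    Matrix (Pairs n) (Pairs n) R :=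
  Matrix.of fun I J =>
    A I.1.1 J.1.1 * A I.1.2 J.1.2 + A I.1.1 J.1.2 * A I.1.2 J.1.1

/-- `Mat(X)`: symmetric matrix with zero diagonal built from a vector indexed by pairs. -/
def matOf {n : ℕ} {R : Type*} [CommRing R] (X : Pairs n → R) :
    Matrix (Fin n) (Fin n) R :=
  Matrix.of fun i j =>
    if h : i < j then X ⟨(i, j), h⟩ else if h' : j < i then X ⟨(j, i), h'⟩ else 0

lemma matOf_diag {n : ℕ} (X : Pairs n → ℚ) (i : Fin n) : matOf X i i = 0 := by
  simp [matOf]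

lemma matOf_lt {n : ℕ} (X : Pairs n → ℚ) {i j : Fin n} (h : i < j) :
    matOf X i j = X ⟨(i, j), h⟩ := by
  simp [matOf, h]

lemma matOf_gt {n : ℕ} (X : Pairs n → ℚ) {i j : Fin n} (h : j < i) :
    matOf X i j = X ⟨(j, i), h⟩ := by
  simp [matOf, h, not_lt_of_gt h]

lemma matOf_nonneg {n : ℕ} (X : Pairs n → ℚ) (hX : ∀ I, 0 ≤ X I) (i j : Fin n) :
    0 ≤ matOf X i j := by
  rcases lt_trichotomy i j with h | h | h
  · rw [matOf_lt X h]; exact hX _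
  · subst h; rw [matOf_diag]
  · rw [matOf_gt X h]; exact hX _

/-- The key summation splitting lemma. -/
lemma sum_pairs {n : ℕ} (X : Pairs n → ℚ) (f : Fin n → Fin n → ℚ) :
    ∑ p : Fin n × Fin n, f p.1 p.2 * matOf X p.1 p.2
      = ∑ I : Pairs n, (f I.1.1 I.1.2 + f I.1.2 I.1.1) * X I := by
  classical
  set F : Fin n × Fin n → ℚ := fun p => f p.1 p.2 * matOf X p.1 p.2 with hF
  have h1 : ∑ p : Fin n × Fin n, F p
      = (∑ p ∈ Finset.univ.filter (fun p : Fin n × Fin n => p.1 < p.2), F p)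
        + ∑ p ∈ Finset.univ.filter (fun p : Fin n × Fin n => ¬ p.1 < p.2), F p :=
    (Finset.sum_filter_add_sum_filter_not _ _ _).symm
  have h2 : ∑ p ∈ Finset.univ.filter (fun p : Fin n × Fin n => ¬ p.1 < p.2), F p
      = ∑ p ∈ Finset.univ.filter (fun p : Fin n × Fin n => p.2 < p.1), F p := by
    rw [← Finset.sum_filter_add_sum_filter_not
      (Finset.univ.filter (fun p : Fin n × Fin n => ¬ p.1 < p.2))
      (fun p : Fin n × Fin n => p.2 < p.1) F]
    have hz : ∑ p ∈ (Finset.univ.filter (fun p : Fin n × Fin n => ¬ p.1 < p.2)).filter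
        (fun p : Fin n × Fin n => ¬ p.2 < p.1), F p = 0 := by
      apply Finset.sum_eq_zero
      intro p hp
      simp only [Finset.mem_filter] at hp
      have : p.1 = p.2 := le_antisymm (not_lt.mp hp.2) (not_lt.mp hp.1.2)
      simp [hF, ← this, matOf_diag]
    rw [hz, add_zero, Finset.filter_filter]
    congr 1
    apply Finset.filter_congr
    intro p _
    constructor
    · exact fun hp => hp.2
    · exact fun hp => ⟨asymm hp, hp⟩
  have h3 : ∑ p ∈ Finset.univ.filter (fun p : Fin n × Fin n => p.2 < p.1), F p
      = ∑ p ∈ Finset.univ.filter (fun p : Fin n × Fin n => p.1 < p.2), F p.swap := by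
    apply Finset.sum_nbij' (fun p => Prod.swap p) (fun p => Prod.swap p)
    · intro a ha; simp at ha ⊢; exact ha
    · intro a ha; simp at ha ⊢; exact ha
    · intro a _; simp
    · intro a _; simp
    · intro a _; rfl
  rw [h1, h2, h3, ← Finset.sum_add_distrib]
  rw [Finset.sum_subtype (p := fun p : Fin n × Fin n => p.1 < p.2)
    (Finset.univ.filter (fun p : Fin n × Fin n => p.1 < p.2))
    (fun x => by simp) (fun p => F p + F p.swap)]
  apply Finset.sum_congr rfl
  intro I _
  obtain ⟨⟨i, j⟩, hij⟩ := I
  simp only [hF, Prod.swap]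
  rw [matOf_lt X hij, matOf_gt X hij]
  ring

theorem stmt11 {n : ℕ} (A : Matrix (Fin n) (Fin n) ℚ)
    (hA0 : ∀ i j, 0 ≤ A i j) (hA1 : ∀ i, ∑ j, A i j = 1)
    (pv : Fin n → ℚ) (hpv : ∀ i, 0 < pv i) (hpv1 : ∑ i, pv i = 1)
    (hinv : pv ᵥ* A = pv)
    (X : Pairs n → ℚ) (hX : ∀ I, 0 ≤ X I)
    (h : zeonSq A *ᵥ X = X) :
    matOf X = A * matOf X * Aᵀ := by
  classical
  set M := matOf X with hM
  set B := A * M * Aᵀ with hB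
  -- entry formula for B
  have hBentry : ∀ i j, B i j
      = ∑ I : Pairs n, (A i I.1.1 * A j I.1.2 + A i I.1.2 * A j I.1.1) * X I := by
    intro i j
    have e1 : B i j = ∑ p : Fin n × Fin n, (fun a b => A i a * A j b) p.1 p.2 * M p.1 p.2 := by
      simp only [hB, Matrix.mul_apply, Matrix.transpose_apply, Finset.sum_mul,
        Fintype.sum_prod_type]
      rw [Finset.sum_comm]
      apply Finset.sum_congr rfl; intro a _
      apply Finset.sum_congr rfl; intro b _
      ring
    rw [e1, hM, sum_pairs X (fun a b => A i a * A j b)]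
  -- off-diagonal: B agrees with M
  have hfix : ∀ I : Pairs n, ∑ J : Pairs n, zeonSq A I J * X J = X I := by
    intro I
    have := congrFun h I
    simpa [Matrix.mulVec, dotProduct] using this
  have hoff : ∀ i j : Fin n, i ≠ j → B i j = M i j := by
    intro i j hij
    rcases lt_trichotomy i j with hlt | heq | hgt
    · rw [hBentry i j, hM, matOf_lt X hlt, ← hfix ⟨(i, j), hlt⟩]
      apply Finset.sum_congr rfl; intro J _
      simp only [zeonSq, Matrix.of_apply]
    · exact absurd heq hij
    · rw [hBentry i j, hM, matOf_gt X hgt, ← hfix ⟨(j, i), hgt⟩]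
      apply Finset.sum_congr rfl; intro J _
      simp only [zeonSq, Matrix.of_apply]; ring
  -- diagonal is nonnegative
  have hdiag_nonneg : ∀ i, 0 ≤ B i i := by
    intro i
    rw [hBentry i i]
    apply Finset.sum_nonneg
    intro J _
    apply mul_nonneg _ (hX J)
    have := hA0 i J.1.1
    have := hA0 i J.1.2
    positivity
  -- trace identity
  have htr : (pv ᵥ* B) ⬝ᵥ pv = (pv ᵥ* M) ⬝ᵥ pv := by
    rw [hB, ← Matrix.vecMul_vecMul, ← Matrix.vecMul_vecMul, hinv,
      Matrix.vecMul_transpose, dotProduct_comm, Matrix.dotProduct_mulVec, hinv,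
      dotProduct_comm]
  have hexp : ∀ C : Matrix (Fin n) (Fin n) ℚ,
      (pv ᵥ* C) ⬝ᵥ pv = ∑ i, ∑ j, pv i * C i j * pv j := by
    intro C
    simp [Matrix.vecMul, dotProduct, Finset.sum_mul]
    rw [Finset.sum_comm]
  have key : ∀ i, ∑ j, pv i * B i j * pv j
      = (∑ j, pv i * M i j * pv j) + pv i * B i i * pv i := by
    intro i
    rw [← Finset.sum_erase_add _ _ (Finset.mem_univ i),
      ← Finset.sum_erase_add _ (fun j => pv i * M i j * pv j) (Finset.mem_univ i)]
    have : pv i * M i i * pv i = 0 := by rw [hM, matOf_diag]; ring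
    rw [this, add_zero]
    congr 1
    apply Finset.sum_congr rfl
    intro j hj
    rw [hoff i j (Ne.symm (Finset.ne_of_mem_erase hj))]
  have hsum0 : ∑ i, pv i * B i i * pv i = 0 := by
    have := htr
    rw [hexp B, hexp M] at this
    have h2 : ∑ i, ∑ j, pv i * B i j * pv j
        = (∑ i, ∑ j, pv i * M i j * pv j) + ∑ i, pv i * B i i * pv i := by
      rw [← Finset.sum_add_distrib]
      exact Finset.sum_congr rfl fun i _ => key i
    rw [this] at h2
    linarith
  have hBdiag : ∀ i, B i i = 0 := by
    intro i
    have hterm : pv i * B i i * pv i = 0 := by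
      have := (Finset.sum_eq_zero_iff_of_nonneg (fun i _ => by
        have := hdiag_nonneg i; have := (hpv i).le; positivity)).mp hsum0 i (Finset.mem_univ i)
      exact this
    have hp := (hpv i).ne'
    rcases mul_eq_zero.mp hterm with h1 | h1
    · rcases mul_eq_zero.mp h1 with h2 | h2
      · exact absurd h2 hp
      · exact h2
    · exact absurd h1 hp
  ext i j
  rcases eq_or_ne i j with rfl | hij
  · rw [hBdiag i, hM, matOf_diag]
  · exact (hoff i j hij).symm
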